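/- For the constructed sequence (n_k)_{k≥1}, let a, b be positive integers with a = 2^r·b for some integer r ≥ 1, and set N_I := max Δ_I. For each pair (i,m) there is exactly one integer c = c(i,m) such that every pair (k,ℓ) with k, k+r ∈ Δ_i^{(m)} and ℓ = k+r satisfies a·n_k − b·n_ℓ = c(i,m), and the number of such pairs is at most #Δ_i^{(m)}; moreover, for sufficiently large i these values c(i,m) are pairwise distinct across different pairs (i,m), so that sup_{c ∈ ℤ} Σ_{i=1}^I Σ_{m=1}^{M(i)} #{(k,ℓ) : k, ℓ ∈ Δ_i^{(m)}, ℓ = k + r, a·n_k − b·n_ℓ = c} = O(max_{i ≤ I, m ≤ M(i)} #Δ_i^{(m)}) = O(N_I/g_{N_I}). -/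

import Mathlib

open Filter

/-- The block `Δ_i = {2^{3^i−1}, …, 2^{3^{i+1}−1} − 1}`. -/
def Blk (i : ℕ) : Finset ℕ := Finset.Ico (2^(3^i - 1)) (2^(3^(i+1) - 1))

/-- `M(i) = ⌈g(#Δ_i)⌉`. -/
noncomputable def Mblk (g : ℕ → ℝ) (i : ℕ) : ℕ := ⌈g ((Blk i).card)⌉₊

/-- `N_I = max Δ_I = 2^{3^{I+1}−1} − 1`. -/
def Nmax (i : ℕ) : ℕ := 2^(3^(i+1) - 1) - 1

lemma aux_E_gap (i : ℕ) : 2^(2^(2^i)) + 3^(i+1) ≤ 2^(2^(2^(i+1))) := by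
  have h0 : i + 1 ≤ 2^i := (Nat.lt_two_pow_self (n := i))
  have h1 : 3^(i+1) ≤ 2^(2^(2^i)) := by
    calc 3^(i+1) ≤ (2^2)^(i+1) := Nat.pow_le_pow_left (by norm_num) _
    _ = 2^(2*(i+1)) := by rw [← pow_mul]
    _ ≤ 2^(2^(2^i)) := by
        apply Nat.pow_le_pow_right (by norm_num)
        calc 2*(i+1) ≤ 2*2^i := by omega
        _ = 2^(i+1) := (pow_succ' 2 i).symm
        _ ≤ 2^(2^i) := Nat.pow_le_pow_right (by norm_num) h0
  have h2 : 2 * 2^(2^(2^i)) ≤ 2^(2^(2^(i+1))) := by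
    have hA : (2:ℕ) ≤ 2^(2^i) := Nat.one_lt_two_pow (by positivity)
    have : 2^(2^i) + 1 ≤ 2^(2^(i+1)) := by
      have : 2^(2^(i+1)) = (2^(2^i))^2 := by
        rw [← pow_mul]; ring_nf
      nlinarith
    calc 2 * 2^(2^(2^i)) = 2^(2^(2^i)+1) := by rw [pow_succ]; ring
    _ ≤ 2^(2^(2^(i+1))) := Nat.pow_le_pow_right (by norm_num) this
  omega

lemma aux_E_gap' (i i' : ℕ) (h : i < i') : 2^(2^(2^i)) + 3^(i+1) ≤ 2^(2^(2^i')) := by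
  refine (aux_E_gap i).trans ?_
  exact Nat.pow_le_pow_right (by norm_num) <| Nat.pow_le_pow_right (by norm_num) <|
    Nat.pow_le_pow_right (by norm_num) h

lemma blk_card (i : ℕ) : (Blk i).card = 2^(3^(i+1) - 1) - 2^(3^i - 1) := by
  simp [Blk]

lemma blk_card_pos (i : ℕ) : 1 ≤ (Blk i).card := by
  rw [blk_card]
  have h0 : 1 ≤ 3^i := Nat.one_le_pow i 3 (by norm_num)
  have h1 : 3^i < 3^(i+1) := Nat.pow_lt_pow_right (by norm_num) (by omega)
  have h2 : 3^i - 1 < 3^(i+1) - 1 := by omega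
  have := Nat.pow_lt_pow_right (a := 2) (by norm_num) h2
  omega

lemma blk_card_lt (i : ℕ) : (Blk i).card < 2^(3^(i+1)) := by
  rw [blk_card]
  have h1 : 1 ≤ 2^(3^(i+1)) := Nat.one_le_two_pow
  have h2 : 2^(3^(i+1) - 1) ≤ 2^(3^(i+1)) := Nat.pow_le_pow_right (by norm_num) (Nat.sub_le _ _)
  have h3 : 1 ≤ 2^(3^i - 1) := Nat.one_le_two_pow
  omega

lemma blk_card_le_Nmax (i I : ℕ) (h : i ≤ I) : (Blk i).card ≤ Nmax I := by
  rw [blk_card, Nmax]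
  have h1 : 2^(3^(i+1) - 1) ≤ 2^(3^(I+1) - 1) := by
    apply Nat.pow_le_pow_right (by norm_num)
    have : 3^(i+1) ≤ 3^(I+1) := Nat.pow_le_pow_right (by norm_num) (by omega)
    omega
  have h2 : 1 ≤ 2^(3^i - 1) := Nat.one_le_two_pow
  omega

lemma Nmax_pos (I : ℕ) : 1 ≤ Nmax I := by
  rw [Nmax]
  have h0 : 3 ≤ 3^(I+1) := Nat.le_self_pow (by omega) 3
  have h1 : 2^1 ≤ 2^(3^(I+1)-1) := Nat.pow_le_pow_right (by norm_num) (by omega)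
  omega

theorem statement14
    (g : ℕ → ℝ)
    (hg_bounds : ∀ N : ℕ, 1 ≤ N → 1 ≤ g N ∧ g N ≤ N)
    (hg_mono : ∀ N : ℕ, 1 ≤ N → g N ≤ g (N+1))
    (hg_ratio_mono : ∀ N : ℕ, 1 ≤ N → (N : ℝ) / g N ≤ ((N:ℝ)+1) / g (N+1))
    (hg_top : Tendsto g atTop atTop)
    (hg_ratio_top : Tendsto (fun N : ℕ => (N : ℝ) / g N) atTop atTop)
    (blk : ℕ → ℕ → Finset ℕ)
    (hcover : ∀ i k, k ∈ Blk i ↔ ∃ m, m ∈ Finset.Icc 1 (Mblk g i) ∧ k ∈ blk i m)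
    (hdisj : ∀ i m m', m ≠ m' → Disjoint (blk i m) (blk i m'))
    (hconsec : ∀ i m m', m < m' → ∀ k ∈ blk i m, ∀ k' ∈ blk i m', k < k')
    (hcard : ∀ i, ∀ m ∈ Finset.Icc 1 (Mblk g i), ∀ m' ∈ Finset.Icc 1 (Mblk g i),
      (blk i m).card ≤ (blk i m').card + 1)
    (n : ℕ → ℕ)
    (hn : ∀ i, ∀ m ∈ Finset.Icc 1 (Mblk g i), ∀ k ∈ blk i m,
      n k = 2^(2^(2^(2^i))) * (2^(k + i*m) + m))
    (a b r : ℕ) (hb : 1 ≤ b) (hr : 1 ≤ r) (hab : a = 2^r * b) :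
    -- (1) for each (i,m) there is a single value c(i,m) taken by a·n_k − b·n_{k+r}
    -- on all pairs (k, k+r) with k, k+r ∈ Δ_i^{(m)}
    (∀ i, ∀ m ∈ Finset.Icc 1 (Mblk g i), ∃ c : ℤ,
      ∀ k, k ∈ blk i m → k + r ∈ blk i m →
        (a : ℤ) * n k - (b : ℤ) * n (k + r) = c) ∧
    -- (2) the number of such pairs is at most #Δ_i^{(m)}
    (∀ i m, ((blk i m).filter (fun k => k + r ∈ blk i m)).card ≤ (blk i m).card) ∧
    -- (3) for sufficiently large block indices, the values c(i,m) are pairwise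
    -- distinct across different pairs (i,m)
    (∃ i₀ : ℕ, ∀ i i' : ℕ, i₀ ≤ i → i₀ ≤ i' →
      ∀ m m' : ℕ, m ∈ Finset.Icc 1 (Mblk g i) → m' ∈ Finset.Icc 1 (Mblk g i') →
        (i, m) ≠ (i', m') →
        ∀ k k' : ℕ, k ∈ blk i m → k + r ∈ blk i m →
          k' ∈ blk i' m' → k' + r ∈ blk i' m' →
          (a : ℤ) * n k - (b : ℤ) * n (k + r) ≠
            (a : ℤ) * n k' - (b : ℤ) * n (k' + r)) ∧
    -- (4) consequently the total count is O(max #Δ_i^{(m)}) = O(N_I / g_{N_I})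
    (∃ C : ℝ, ∀ I : ℕ, 1 ≤ I → ∀ c : ℤ,
      ((∑ i ∈ Finset.Icc 1 I, ∑ m ∈ Finset.Icc 1 (Mblk g i),
        ((blk i m ×ˢ blk i m).filter
          (fun p => p.2 = p.1 + r ∧ (a : ℤ) * n p.1 - (b : ℤ) * n p.2 = c)).card : ℕ) : ℝ)
        ≤ C * (Nmax I) / g (Nmax I)) := by
  -- the multiplier K and the value function
  set K : ℤ := (b : ℤ) * (2^r - 1) with hK
  have hKpos : 0 < K := by
    have : (2:ℤ) ≤ 2^r := by
      calc (2:ℤ) = 2^1 := (pow_one 2).symm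
      _ ≤ 2^r := pow_le_pow_right₀ (by norm_num) hr
    have hb' : (1:ℤ) ≤ b := by exact_mod_cast hb
    nlinarith
  -- value computation
  have hval : ∀ i, ∀ m ∈ Finset.Icc 1 (Mblk g i), ∀ k, k ∈ blk i m → k + r ∈ blk i m →
      (a : ℤ) * n k - (b : ℤ) * n (k + r) = K * (2^(2^(2^(2^i))) * m : ℕ) := by
    intro i m hm k hk hk'
    rw [hn i m hm k hk, hn i m hm (k+r) hk', hab]
    push_cast
    rw [show k + r + i*m = (k + i*m) + r by ring, pow_add]
    ring
  -- Mblk bounds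
  have hM1 : ∀ i, 1 ≤ Mblk g i := by
    intro i
    have h1 := (hg_bounds _ (blk_card_pos i)).1
    exact Nat.one_le_ceil_iff.mpr (by linarith) |>.trans (le_refl _)
  have hMle : ∀ i, Mblk g i ≤ (Blk i).card := by
    intro i
    have h2 := (hg_bounds _ (blk_card_pos i)).2
    exact Nat.ceil_le.mpr h2
  -- injectivity of v(i,m) = 2^(2^(2^(2^i))) * m
  have hvne : ∀ i i' m m', m ∈ Finset.Icc 1 (Mblk g i) → m' ∈ Finset.Icc 1 (Mblk g i') →
      (i, m) ≠ (i', m') → (2^(2^(2^(2^i))) * m : ℕ) ≠ 2^(2^(2^(2^i'))) * m' := by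
    have key : ∀ i i' m m', m ∈ Finset.Icc 1 (Mblk g i) → m' ∈ Finset.Icc 1 (Mblk g i') →
        i < i' → (2^(2^(2^(2^i))) * m : ℕ) < 2^(2^(2^(2^i'))) * m' := by
      intro i i' m m' hm hm' hii
      simp only [Finset.mem_Icc] at hm hm'
      have hmlt : m < 2^(3^(i+1)) := lt_of_le_of_lt (hm.2.trans (hMle i)) (blk_card_lt i)
      calc 2^(2^(2^(2^i))) * m < 2^(2^(2^(2^i))) * 2^(3^(i+1)) := by
            exact (Nat.mul_lt_mul_left (by positivity)).mpr hmlt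
      _ = 2^(2^(2^(2^i)) + 3^(i+1)) := (pow_add 2 _ _).symm
      _ ≤ 2^(2^(2^(2^i'))) := Nat.pow_le_pow_right (by norm_num) (aux_E_gap' i i' hii)
      _ ≤ 2^(2^(2^(2^i'))) * m' := Nat.le_mul_of_pos_right _ (by omega)
    intro i i' m m' hm hm' hne
    rcases lt_trichotomy i i' with h | h | h
    · exact Nat.ne_of_lt (key i i' m m' hm hm' h)
    · subst h
      have hmm : m ≠ m' := by simpa using hne
      have : (0:ℕ) < 2^(2^(2^(2^i))) := by positivity
      intro hEq
      exact hmm (Nat.eq_of_mul_eq_mul_left this hEq)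
    · exact (Nat.ne_of_lt (key i' i m' m hm' hm h)).symm
  refine ⟨?_, ?_, ?_, ?_⟩
  · intro i m hm
    exact ⟨K * (2^(2^(2^(2^i))) * m : ℕ), fun k hk hk' => hval i m hm k hk hk'⟩
  · intro i m
    exact Finset.card_le_card (Finset.filter_subset _ _)
  · refine ⟨0, fun i i' _ _ m m' hm hm' hne k k' hk hk1 hk2 hk3 => ?_⟩
    rw [hval i m hm k hk hk1, hval i' m' hm' k' hk2 hk3]
    intro hEq
    have := mul_left_cancel₀ (ne_of_gt hKpos) hEq
    exact hvne i i' m m' hm hm' hne (by exact_mod_cast this)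
  · -- Part (4)
    refine ⟨2, fun I hI c => ?_⟩
    have hN1 : 1 ≤ Nmax I := Nmax_pos I
    have hgN := hg_bounds (Nmax I) hN1
    have hgNpos : (0:ℝ) < g (Nmax I) := by linarith [hgN.1]
    have hRge1 : (1:ℝ) ≤ (Nmax I : ℝ) / g (Nmax I) := by
      rw [le_div_iff₀ hgNpos]; simpa using hgN.2
    set F : ℕ → ℕ → Finset (ℕ × ℕ) := fun i m => (blk i m ×ˢ blk i m).filter
      (fun p => p.2 = p.1 + r ∧ (a : ℤ) * n p.1 - (b : ℤ) * n p.2 = c) with hF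
    -- a nonempty filter forces the value of c
    have hforce : ∀ i, ∀ m ∈ Finset.Icc 1 (Mblk g i), (F i m).Nonempty →
        K * (2^(2^(2^(2^i))) * m : ℕ) = c := by
      rintro i m hm ⟨p, hp⟩
      simp only [hF, Finset.mem_filter, Finset.mem_product] at hp
      obtain ⟨⟨h1, h2⟩, h3, h4⟩ := hp
      rw [← hval i m hm p.1 h1 (h3 ▸ h2), ← h3]
      exact h4
    -- card of the filter is at most card of the block
    have hFcard : ∀ i m, (F i m).card ≤ (blk i m).card := by
      intro i m
      apply Finset.card_le_card_of_injOn Prod.fst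
      · intro p hp
        simp only [hF, Finset.mem_coe, Finset.mem_filter, Finset.mem_product] at hp
        exact hp.1.1
      · intro p hp q hq hpq
        simp only [hF, Finset.coe_filter, Set.mem_setOf_eq, Finset.mem_product] at hp hq
        have : p.2 = q.2 := by rw [hp.2.1, hq.2.1, hpq]
        exact Prod.ext hpq this
    -- blocks partition Blk i
    have hsum : ∀ i, ∑ m ∈ Finset.Icc 1 (Mblk g i), (blk i m).card = (Blk i).card := by
      intro i
      rw [← Finset.card_biUnion (fun m _ m' _ h => hdisj i m m' h)]
      congr 1
      ext k
      simp only [Finset.mem_biUnion]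
      exact (hcover i k).symm
    -- each block card is bounded
    have hnat : ∀ i, ∀ m ∈ Finset.Icc 1 (Mblk g i),
        Mblk g i * (blk i m).card ≤ (Blk i).card + Mblk g i := by
      intro i m hm
      calc Mblk g i * (blk i m).card
          = ∑ _m' ∈ Finset.Icc 1 (Mblk g i), (blk i m).card := by
            rw [Finset.sum_const, Nat.card_Icc, Nat.add_sub_cancel, smul_eq_mul]
      _ ≤ ∑ m' ∈ Finset.Icc 1 (Mblk g i), ((blk i m').card + 1) :=
            Finset.sum_le_sum (fun m' hm' => hcard i m hm m' hm')
      _ = (Blk i).card + Mblk g i := by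
            rw [Finset.sum_add_distrib, hsum i, Finset.sum_const, Nat.card_Icc,
              Nat.add_sub_cancel, smul_eq_mul, mul_one]
    -- ratio monotonicity chain
    have hratio : ∀ A B : ℕ, 1 ≤ A → A ≤ B → (A:ℝ)/g A ≤ (B:ℝ)/g B := by
      intro A B hA hAB
      induction B, hAB using Nat.le_induction with
      | base => exact le_refl _
      | succ B hB ih =>
        refine ih.trans ?_
        have := hg_ratio_mono B (hA.trans hB)
        push_cast
        linarith
    -- real bound on each block card
    have hblk_bound : ∀ i, i ≤ I → ∀ m ∈ Finset.Icc 1 (Mblk g i),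
        ((blk i m).card : ℝ) ≤ 2 * (Nmax I) / g (Nmax I) := by
      intro i hiI m hm
      have hBc1 : 1 ≤ (Blk i).card := blk_card_pos i
      have hgB := hg_bounds _ hBc1
      have hgBpos : (0:ℝ) < g ((Blk i).card) := by linarith [hgB.1]
      have hMpos : (0:ℝ) < (Mblk g i : ℝ) := by exact_mod_cast hM1 i
      have hMge : g ((Blk i).card) ≤ (Mblk g i : ℝ) := Nat.le_ceil _
      have h1 : ((blk i m).card : ℝ) ≤ ((Blk i).card : ℝ) / (Mblk g i) + 1 := by
        rw [div_add' _ _ _ (ne_of_gt hMpos), le_div_iff₀ hMpos]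
        have := hnat i m hm
        have : ((Mblk g i : ℝ)) * ((blk i m).card) ≤ ((Blk i).card : ℝ) + (Mblk g i) := by
          exact_mod_cast this
        linarith [this]
      have h2 : ((Blk i).card : ℝ) / (Mblk g i) ≤ ((Blk i).card : ℝ) / g ((Blk i).card) := by
        apply div_le_div_of_nonneg_left (by positivity) hgBpos hMge
      have h3 : ((Blk i).card : ℝ) / g ((Blk i).card) ≤ (Nmax I : ℝ) / g (Nmax I) :=
        hratio _ _ hBc1 (blk_card_le_Nmax i I hiI)
      calc ((blk i m).card : ℝ) ≤ ((Blk i).card : ℝ) / (Mblk g i) + 1 := h1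
      _ ≤ (Nmax I : ℝ) / g (Nmax I) + 1 := by linarith
      _ ≤ (Nmax I : ℝ) / g (Nmax I) + (Nmax I : ℝ) / g (Nmax I) := by linarith
      _ = 2 * (Nmax I) / g (Nmax I) := by ring
    have hgoal : ∀ i m, ((blk i m ×ˢ blk i m).filter
        (fun p => p.2 = p.1 + r ∧ (a : ℤ) * n p.1 - (b : ℤ) * n p.2 = c)) = F i m :=
      fun i m => by rw [hF]
    simp only [hgoal]
    by_cases hex : ∃ i₁ ∈ Finset.Icc 1 I, ∃ m₁ ∈ Finset.Icc 1 (Mblk g i₁), (F i₁ m₁).Nonempty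
    · obtain ⟨i₁, hi₁, m₁, hm₁, hne₁⟩ := hex
      have hzero : ∀ i ∈ Finset.Icc 1 I, ∀ m ∈ Finset.Icc 1 (Mblk g i),
          (i, m) ≠ (i₁, m₁) → (F i m).card = 0 := by
        intro i hi m hm hne
        rw [Finset.card_eq_zero]
        by_contra h
        have hne' := Finset.nonempty_iff_ne_empty.mpr h
        have h1 := hforce i m hm hne'
        have h2 := hforce i₁ m₁ hm₁ hne₁
        have h3 := mul_left_cancel₀ (ne_of_gt hKpos) (h1.trans h2.symm)
        exact hvne i i₁ m m₁ hm hm₁ hne (by exact_mod_cast h3)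
      have hsum_eq : (∑ i ∈ Finset.Icc 1 I, ∑ m ∈ Finset.Icc 1 (Mblk g i), (F i m).card)
          = (F i₁ m₁).card := by
        rw [Finset.sum_eq_single_of_mem i₁ hi₁
          (fun i hi hne => Finset.sum_eq_zero
            (fun m hm => hzero i hi m hm (by simp [Prod.ext_iff, hne])))]
        exact Finset.sum_eq_single_of_mem m₁ hm₁
          (fun m hm hne => hzero i₁ hi₁ m hm (by simp [Prod.ext_iff, hne]))
      rw [hsum_eq]
      calc ((F i₁ m₁).card : ℝ) ≤ ((blk i₁ m₁).card : ℝ) := by exact_mod_cast hFcard i₁ m₁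
      _ ≤ 2 * (Nmax I) / g (Nmax I) := hblk_bound i₁ (Finset.mem_Icc.mp hi₁).2 m₁ hm₁
    · push_neg at hex
      have : (∑ i ∈ Finset.Icc 1 I, ∑ m ∈ Finset.Icc 1 (Mblk g i), (F i m).card) = 0 := by
        apply Finset.sum_eq_zero
        intro i hi
        apply Finset.sum_eq_zero
        intro m hm
        rw [Finset.card_eq_zero]
        by_contra h
        exact h (hex i hi m hm)
      rw [this]
      push_cast
      positivity
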